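/- Let a be a full rank n×m real matrix (m ≤ n). Then there exist z ∈ O(n) and a symmetric positive definite m×m matrix s such that a equals z times the n×m matrix whose top m×m block is s and whose remaining (n−m)×m block is zero. -/

import Mathlib

open Matrix

private lemma sum_fin_dite {M : Type*} [AddCommMonoid M] {m n : ℕ} (hmn : m ≤ n)
    (G : Fin m → M) :
    ∑ k : Fin n, (if h : (k : ℕ) < m then G ⟨k, h⟩ else 0) = ∑ k : Fin m, G k := by
  rw [Fin.sum_univ_eq_sum_range (fun k => if h : k < m then G ⟨k, h⟩ else 0) n,
    ← Finset.sum_subset (Finset.range_subset_range.mpr hmn) (by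
      intro x hx hnx
      simp only [Finset.mem_range] at hnx
      simp [hnx]),
    ← Fin.sum_univ_eq_sum_range (fun k => if h : k < m then G ⟨k, h⟩ else 0) m]
  exact Finset.sum_congr rfl fun k _ => by simp [k.isLt]

/-- Every full-rank `n × m` real matrix `a` (with `m ≤ n`) can be
written as `a = z * (s stacked over 0)` with `z ∈ O(n)` and `s` symmetric
positive definite `m × m`. -/
theorem stmt_5 {n m : ℕ} (hmn : m ≤ n) (a : Matrix (Fin n) (Fin m) ℝ)
    (ha : a.rank = m) :
    ∃ z ∈ Matrix.orthogonalGroup (Fin n) ℝ, ∃ s : Matrix (Fin m) (Fin m) ℝ,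
      s.PosDef ∧
      a = z * Matrix.of (fun (i : Fin n) (j : Fin m) =>
        if h : (i : ℕ) < m then s ⟨(i : ℕ), h⟩ j else 0) := by
  classical
  -- injectivity of mulVec
  have hinj : Function.Injective a.mulVecLin := by
    rw [← LinearMap.ker_eq_bot]
    have h1 := LinearMap.finrank_range_add_finrank_ker a.mulVecLin
    have h2 : Module.finrank ℝ (LinearMap.range a.mulVecLin) = m := ha
    rw [h2, Module.finrank_pi, Fintype.card_fin] at h1
    have h3 : Module.finrank ℝ (LinearMap.ker a.mulVecLin) = 0 := by omega
    exact Submodule.finrank_eq_zero.mp h3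
  set g := aᴴ * a with hg_def
  have hgsd : g.PosSemidef := posSemidef_conjTranspose_mul_self a
  have hgpd : g.PosDef := by
    refine PosDef.of_dotProduct_mulVec_pos hgsd.1 (fun x hx => ?_)
    rcases lt_or_eq_of_le (hgsd.dotProduct_mulVec_nonneg x) with h | h
    · exact h
    · exfalso
      have h0 : g *ᵥ x = 0 := (hgsd.dotProduct_mulVec_zero_iff x).mp h.symm
      have ha0 : a *ᵥ x = 0 := (conjTranspose_mul_self_mulVec_eq_zero a x).mp h0
      exact hx (hinj (by simpa using ha0))
  have hgsd' := hgpd.posSemidef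
  set s := (open scoped MatrixOrder in CFC.sqrt g) with hs_def
  have hssd : s.PosSemidef := by open scoped MatrixOrder in exact (CFC.sqrt_nonneg g).posSemidef
  have hss : s * s = g := by open scoped MatrixOrder in exact CFC.sqrt_mul_sqrt_self g hgsd'.nonneg
  have hspd : s.PosDef := by
    refine PosDef.of_dotProduct_mulVec_pos hssd.1 (fun x hx => ?_)
    rcases lt_or_eq_of_le (hssd.dotProduct_mulVec_nonneg x) with h | h
    · exact h
    · exfalso
      have h0 : s *ᵥ x = 0 := (hssd.dotProduct_mulVec_zero_iff x).mp h.symm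
      have hg0 : g *ᵥ x = 0 := by
        rw [← hss, ← mulVec_mulVec, h0, mulVec_zero]
      have := hgpd.dotProduct_mulVec_pos hx
      rw [hg0, dotProduct_zero] at this
      exact lt_irrefl _ this
  have hsdet : IsUnit s.det := isUnit_iff_ne_zero.mpr hspd.det_pos.ne'
  set q := a * s⁻¹ with hq_def
  have hqq : qᴴ * q = 1 := by
    have hsinv : (s⁻¹)ᴴ = s⁻¹ := by rw [conjTranspose_nonsing_inv, hssd.1.eq]
    calc qᴴ * q = s⁻¹ * (aᴴ * a) * s⁻¹ := by
          rw [hq_def, conjTranspose_mul, hsinv, Matrix.mul_assoc, Matrix.mul_assoc,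
            Matrix.mul_assoc]
      _ = s⁻¹ * (s * s) * s⁻¹ := by rw [← hg_def, hss]
      _ = (s⁻¹ * s) * (s * s⁻¹) := by
          rw [Matrix.mul_assoc, Matrix.mul_assoc, Matrix.mul_assoc]
      _ = 1 := by rw [Matrix.nonsing_inv_mul s hsdet, Matrix.mul_nonsing_inv s hsdet,
            Matrix.mul_one]
  have haqs : a = q * s := by
    rw [hq_def, Matrix.mul_assoc, Matrix.nonsing_inv_mul s hsdet, Matrix.mul_one]
  -- columns of q, extended by zero, as vectors in Euclidean space
  let v : Fin n → EuclideanSpace ℝ (Fin n) := fun j =>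
    WithLp.toLp 2 (fun i => if h : (j : ℕ) < m then q i ⟨(j : ℕ), h⟩ else 0)
  let S : Set (Fin n) := {j | (j : ℕ) < m}
  have hqentry : ∀ (j k : Fin m), ∑ t, q t j * q t k = if j = k then 1 else 0 := by
    intro j k
    have := congrFun (congrFun hqq j) k
    simpa [Matrix.mul_apply, conjTranspose_apply, Matrix.one_apply] using this
  have hv : Orthonormal ℝ (S.restrict v) := by
    rw [orthonormal_iff_ite]
    rintro ⟨i, hi⟩ ⟨j, hj⟩
    have hi' : (i : ℕ) < m := hi
    have hj' : (j : ℕ) < m := hj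
    have key := hqentry ⟨i, hi'⟩ ⟨j, hj'⟩
    change inner ℝ (v i) (v j) = _
    simp only [Set.restrict_apply, PiLp.inner_apply, RCLike.inner_apply, conj_trivial, v,
      hi', hj', dif_pos, PiLp.toLp_apply]
    rw [Finset.sum_congr rfl fun _ _ => mul_comm _ _, key]
    simp [Fin.ext_iff, Subtype.ext_iff]
  obtain ⟨b, hb⟩ := hv.exists_orthonormalBasis_extension_of_card_eq (by simp)
  set z : Matrix (Fin n) (Fin n) ℝ := Matrix.of (fun i j => b j i) with hz_def
  have hz : z ∈ Matrix.orthogonalGroup (Fin n) ℝ := by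
    rw [Matrix.mem_orthogonalGroup_iff']
    ext i j
    have := (orthonormal_iff_ite.mp b.orthonormal) i j
    simp only [PiLp.inner_apply, RCLike.inner_apply, conj_trivial] at this
    simp only [Matrix.mul_apply, hz_def, Matrix.one_apply, star_eq_conjTranspose,
      conjTranspose_apply, Matrix.of_apply, star_trivial, Matrix.transpose_apply]
    rw [← this]
    exact Finset.sum_congr rfl fun _ _ => mul_comm _ _
  refine ⟨z, hz, s, hspd, ?_⟩
  rw [haqs]
  ext i j
  rw [Matrix.mul_apply, Matrix.mul_apply]
  have : ∀ k : Fin n, z i k * Matrix.of (fun (i : Fin n) (j : Fin m) =>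
      if h : (i : ℕ) < m then s ⟨(i : ℕ), h⟩ j else 0) k j =
      if h : (k : ℕ) < m then q i ⟨(k : ℕ), h⟩ * s ⟨(k : ℕ), h⟩ j else 0 := by
    intro k
    by_cases h : (k : ℕ) < m
    · have hkS : k ∈ S := h
      have hbk : b k = v k := hb k hkS
      simp only [Matrix.of_apply, dif_pos h, hz_def]
      have : (b k : EuclideanSpace ℝ (Fin n)) i = q i ⟨(k : ℕ), h⟩ := by
        rw [hbk]; simp [v, h]
      rw [this]
    · simp [h]
  rw [Finset.sum_congr rfl (fun k _ => this k),
    sum_fin_dite hmn (fun k : Fin m => q i k * s k j)]
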